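/- Let G₁,…,G_m be independent uniformly random 2-element subsets of {1,…,n} with m = n/4, and let d = c·log n + 1. Then the probability that some subsequence of d of these gates forms a circuit of depth d is at most m·(2m/n)^{d−1} ≤ n^{1−c}. -/

import Mathlib

open scoped Classical
open Finset

lemma erase_nonempty_of_two {n : ℕ} (s : Finset (Fin n)) (hs : s.card = 2) {a : Fin n}
    (ha : a ∈ s) : (s.erase a).Nonempty := by
  apply Finset.card_pos.1
  rw [Finset.card_erase_of_mem ha, hs]
  norm_num

lemma eq_singleton_min' {α : Type*} [LinearOrder α] (t : Finset α) (h : t.card = 1)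
    (hne : t.Nonempty) : t = {t.min' hne} := by
  obtain ⟨x, hx⟩ := Finset.card_eq_one.1 h
  subst hx
  rw [Finset.min'_singleton]

/-- number of 2-element subsets meeting a set `U` is at most `U.card * (n-1)`. -/
lemma countMeet (n : ℕ) (hn : 0 < n) (U : Finset (Fin n)) :
    ((Finset.univ : Finset {s : Finset (Fin n) // s.card = 2}).filter
      (fun s => (s.1 ∩ U).Nonempty)).card ≤ U.card * (n - 1) := by
  classical
  have htarget : (U.sigma (fun a => Finset.univ.erase a)).card = U.card * (n-1) := by
    rw [Finset.card_sigma]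
    have : ∀ a ∈ U, ((Finset.univ : Finset (Fin n)).erase a).card = n - 1 := by
      intro a _
      rw [Finset.card_erase_of_mem (Finset.mem_univ a), Finset.card_univ, Fintype.card_fin]
    rw [Finset.sum_congr rfl this, Finset.sum_const, smul_eq_mul]
  rw [← htarget]
  set F : {s : Finset (Fin n) // s.card = 2} → ((_ : Fin n) × Fin n) :=
    fun s => if h : (s.1 ∩ U).Nonempty then
      ⟨(s.1 ∩ U).min' h,
        (s.1.erase ((s.1 ∩ U).min' h)).min'
          (erase_nonempty_of_two s.1 s.2
            (Finset.mem_inter.1 (Finset.min'_mem _ h)).1)⟩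
    else ⟨⟨0, hn⟩, ⟨0, hn⟩⟩ with hF
  -- key reconstruction fact
  have key : ∀ s ∈ (Finset.univ : Finset {s : Finset (Fin n) // s.card = 2}).filter
      (fun s => (s.1 ∩ U).Nonempty),
      (F s).1 ∈ U ∧ (F s).2 ≠ (F s).1 ∧ s.1 = {(F s).1, (F s).2} := by
    intro s hs
    have h : (s.1 ∩ U).Nonempty := (Finset.mem_filter.1 hs).2
    have ha : (s.1 ∩ U).min' h ∈ s.1 ∩ U := Finset.min'_mem _ h
    have haU : (s.1 ∩ U).min' h ∈ U := (Finset.mem_inter.1 ha).2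
    have has : (s.1 ∩ U).min' h ∈ s.1 := (Finset.mem_inter.1 ha).1
    have hcard : (s.1.erase ((s.1 ∩ U).min' h)).card = 1 := by
      rw [Finset.card_erase_of_mem has, s.2]
    have hne := erase_nonempty_of_two s.1 s.2 has
    have hsingle := eq_singleton_min' _ hcard hne
    have hFs : F s = ⟨(s.1 ∩ U).min' h, (s.1.erase ((s.1 ∩ U).min' h)).min' hne⟩ := by
      rw [hF]; simp only [dif_pos h]
    rw [hFs]
    refine ⟨haU, ?_, ?_⟩
    · have : (s.1.erase ((s.1 ∩ U).min' h)).min' hne ∈ s.1.erase ((s.1 ∩ U).min' h) :=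
        Finset.min'_mem _ hne
      exact Finset.ne_of_mem_erase this
    · simp only []
      conv_lhs => rw [← Finset.insert_erase has, hsingle]
  apply Finset.card_le_card_of_injOn F
  · intro s hs
    obtain ⟨h1, h2, _⟩ := key s hs
    rw [Finset.mem_coe, Finset.mem_sigma]
    exact ⟨h1, Finset.mem_erase.2 ⟨h2, Finset.mem_univ _⟩⟩
  · intro s hs t ht hst
    obtain ⟨_, _, h3⟩ := key s hs
    obtain ⟨_, _, h3'⟩ := key t ht
    apply Subtype.ext
    rw [h3, h3', hst]

def chainP {n k : ℕ} (h : Fin k → {s : Finset (Fin n) // s.card = 2}) : Prop :=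
  ∀ i : Fin k, 0 < i.1 → ∃ j, j < i ∧ ((h i).1 ∩ (h j).1).Nonempty

lemma chain_union_card {n k : ℕ} (h : Fin k → {s : Finset (Fin n) // s.card = 2})
    (hc : chainP h) :
    ((Finset.univ : Finset (Fin k)).biUnion (fun i => (h i).1)).card ≤ k + 1 := by
  have main : ∀ t : ℕ,
      (((Finset.univ : Finset (Fin k)).filter (fun i => i.1 < t)).biUnion
        (fun i => (h i).1)).card ≤ t + 1 := by
    intro t
    induction t with
    | zero =>
      have : ((Finset.univ : Finset (Fin k)).filter (fun i => i.1 < 0)) = ∅ := by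
        apply Finset.filter_false_of_mem; intro i _; omega
      rw [this]; simp
    | succ t ih =>
      by_cases hk : t < k
      · have hins : ((Finset.univ : Finset (Fin k)).filter (fun i => i.1 < t + 1))
            = insert ⟨t, hk⟩ ((Finset.univ : Finset (Fin k)).filter (fun i => i.1 < t)) := by
          ext i
          simp only [Finset.mem_insert, Finset.mem_filter, Finset.mem_univ, true_and]
          constructor
          · intro hi
            rcases Nat.lt_succ_iff_lt_or_eq.1 hi with h1 | h1
            · exact Or.inr h1
            · exact Or.inl (Fin.ext h1)
          · rintro (rfl | hi)
            · exact Nat.lt_succ_self t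
            · omega
        rw [hins, Finset.biUnion_insert]
        set U := ((Finset.univ : Finset (Fin k)).filter (fun i => i.1 < t)).biUnion
          (fun i => (h i).1) with hU
        set s := (h ⟨t, hk⟩).1 with hs
        have hsU : (s ∪ U).card ≤ (s \ U).card + U.card := by
          calc (s ∪ U).card = ((s \ U) ∪ U).card := by rw [Finset.sdiff_union_self_eq_union]
          _ ≤ (s \ U).card + U.card := Finset.card_union_le _ _
        rcases Nat.eq_zero_or_pos t with rfl | ht
        · -- t = 0 : U = ∅, card s = 2
          have : U = ∅ := by
            rw [hU]
            have : ((Finset.univ : Finset (Fin k)).filter (fun i => i.1 < 0)) = ∅ := by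
              apply Finset.filter_false_of_mem; intro i _; omega
            rw [this]; simp
          rw [this, Finset.union_empty, hs, (h ⟨0, hk⟩).2]
        · -- t > 0 : new gate meets U
          obtain ⟨j, hj, hnonempty⟩ := hc ⟨t, hk⟩ ht
          have hjU : (h j).1 ⊆ U := by
            intro x hx
            rw [hU]
            exact Finset.mem_biUnion.2 ⟨j, Finset.mem_filter.2 ⟨Finset.mem_univ _, hj⟩, hx⟩
          have hmeet : (s ∩ U).Nonempty := by
            obtain ⟨x, hx⟩ := hnonempty
            rw [Finset.mem_inter] at hx
            exact ⟨x, Finset.mem_inter.2 ⟨hx.1, hjU hx.2⟩⟩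
          have h1 : 1 ≤ (s ∩ U).card := Finset.card_pos.2 hmeet
          have h2 : (s \ U).card + (s ∩ U).card = s.card := Finset.card_sdiff_add_card_inter s U
          have hs2 : s.card = 2 := by rw [hs]; exact (h ⟨t, hk⟩).2
          have h3 : (s \ U).card ≤ 1 := by omega
          omega
      · have : ((Finset.univ : Finset (Fin k)).filter (fun i => i.1 < t + 1))
            = ((Finset.univ : Finset (Fin k)).filter (fun i => i.1 < t)) := by
          apply Finset.filter_congr
          intro i _
          have := i.2
          constructor <;> intro <;> omega
        rw [this]
        omega
  have huniv : ((Finset.univ : Finset (Fin k)).filter (fun i => i.1 < k)) = Finset.univ := by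
    apply Finset.filter_true_of_mem
    intro i _; exact i.2
  calc ((Finset.univ : Finset (Fin k)).biUnion (fun i => (h i).1)).card
      = (((Finset.univ : Finset (Fin k)).filter (fun i => i.1 < k)).biUnion
        (fun i => (h i).1)).card := by rw [huniv]
    _ ≤ k + 1 := main k






lemma card_S (n : ℕ) : Fintype.card {s : Finset (Fin n) // s.card = 2} = n.choose 2 := by
  simpa using Fintype.card_finset_len (α := Fin n) 2

lemma chainP_init {n k : ℕ} (h : Fin (k + 1) → {s : Finset (Fin n) // s.card = 2})
    (hc : chainP h) : chainP (Fin.init h) := by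
  intro i hi
  obtain ⟨j, hj, hmeet⟩ := hc i.castSucc (by simpa using hi)
  have hjk : j.1 < k := lt_of_lt_of_le hj (by simp [Fin.le_def])
  refine ⟨⟨j.1, hjk⟩, by simpa [Fin.lt_def] using hj, ?_⟩
  have h1 : Fin.init h i = h i.castSucc := rfl
  have h2 : Fin.init h ⟨j.1, hjk⟩ = h j := by
    have : Fin.castSucc (⟨j.1, hjk⟩ : Fin k) = j := by ext; rfl
    rw [Fin.init]; rw [this]
  rw [h1, h2]
  exact hmeet

lemma chain_count (n : ℕ) (hn : 0 < n) (k : ℕ) :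
    ((Finset.univ : Finset (Fin (k+1) → {s : Finset (Fin n) // s.card = 2})).filter
        chainP).card ≤ n.choose 2 * ∏ i ∈ Finset.range k, ((i + 2) * (n - 1)) := by
  induction k with
  | zero =>
    have : ((Finset.univ : Finset (Fin 1 → {s : Finset (Fin n) // s.card = 2})).filter
        chainP) = Finset.univ := by
      apply Finset.filter_true_of_mem
      intro h _ i hi
      have := i.2
      omega
    rw [this]
    simp [Finset.card_univ, card_S]
  | succ k ih =>
    have hmap : ∀ h ∈ ((Finset.univ : Finset (Fin (k+2) → {s : Finset (Fin n) // s.card = 2})).filter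
        chainP), Fin.init h ∈ ((Finset.univ : Finset (Fin (k+1) → {s : Finset (Fin n) // s.card = 2})).filter chainP) := by
      intro h hh
      exact Finset.mem_filter.2 ⟨Finset.mem_univ _, chainP_init h (Finset.mem_filter.1 hh).2⟩
    rw [Finset.card_eq_sum_card_fiberwise hmap]
    have fiber_bound : ∀ h' ∈ ((Finset.univ : Finset (Fin (k+1) → {s : Finset (Fin n) // s.card = 2})).filter chainP),
        (((Finset.univ : Finset (Fin (k+2) → {s : Finset (Fin n) // s.card = 2})).filter
          chainP).filter (fun h => Fin.init h = h')).card ≤ (k + 2) * (n - 1) := by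
      intro h' hh'
      set U := ((Finset.univ : Finset (Fin (k+1))).biUnion (fun i => (h' i).1)) with hU
      have hUcard : U.card ≤ k + 2 := chain_union_card h' (Finset.mem_filter.1 hh').2
      have step1 : (((Finset.univ : Finset (Fin (k+2) → {s : Finset (Fin n) // s.card = 2})).filter
          chainP).filter (fun h => Fin.init h = h')).card ≤
          ((Finset.univ : Finset {s : Finset (Fin n) // s.card = 2}).filter
            (fun s => (s.1 ∩ U).Nonempty)).card := by
        apply Finset.card_le_card_of_injOn (fun h => h (Fin.last (k+1)))
        · intro h hh
          rw [Finset.mem_coe, Finset.mem_filter] at hh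
          obtain ⟨hh1, hh2⟩ := hh
          have hcP : chainP h := (Finset.mem_filter.1 hh1).2
          obtain ⟨j, hj, hmeet⟩ := hcP (Fin.last (k+1)) (by simp)
          have hjk : j.1 < k + 1 := hj
          have hjval : h j = h' ⟨j.1, hjk⟩ := by
            rw [← hh2]
            have : Fin.castSucc (⟨j.1, hjk⟩ : Fin (k+1)) = j := by ext; rfl
            rw [Fin.init, this]
          refine Finset.mem_filter.2 ⟨Finset.mem_univ _, ?_⟩
          obtain ⟨x, hx⟩ := hmeet
          rw [Finset.mem_inter] at hx
          refine ⟨x, Finset.mem_inter.2 ⟨hx.1, ?_⟩⟩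
          rw [hU]
          refine Finset.mem_biUnion.2 ⟨⟨j.1, hjk⟩, Finset.mem_univ _, ?_⟩
          rw [← hjval]
          exact hx.2
        · intro h1 hh1 h2 hh2 heq
          simp only [Finset.coe_filter, Set.mem_setOf_eq] at hh1 hh2
          funext i
          refine Fin.lastCases ?_ ?_ i
          · exact heq
          · intro j
            have e1 : h1 j.castSucc = Fin.init h1 j := rfl
            have e2 : h2 j.castSucc = Fin.init h2 j := rfl
            rw [e1, e2, hh1.2, hh2.2]
      calc _ ≤ U.card * (n - 1) := le_trans step1 (countMeet n hn U)
        _ ≤ (k + 2) * (n - 1) := Nat.mul_le_mul_right _ hUcard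
    calc ∑ h' ∈ ((Finset.univ : Finset (Fin (k+1) → {s : Finset (Fin n) // s.card = 2})).filter chainP),
          (((Finset.univ : Finset (Fin (k+2) → {s : Finset (Fin n) // s.card = 2})).filter
            chainP).filter (fun h => Fin.init h = h')).card
        ≤ ∑ _h' ∈ ((Finset.univ : Finset (Fin (k+1) → {s : Finset (Fin n) // s.card = 2})).filter chainP),
          (k + 2) * (n - 1) := Finset.sum_le_sum fiber_bound
      _ = ((Finset.univ : Finset (Fin (k+1) → {s : Finset (Fin n) // s.card = 2})).filter chainP).card
          * ((k + 2) * (n - 1)) := by rw [Finset.sum_const, smul_eq_mul]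
      _ ≤ (n.choose 2 * ∏ i ∈ Finset.range k, ((i + 2) * (n - 1))) * ((k + 2) * (n - 1)) :=
          Nat.mul_le_mul_right _ ih
      _ = n.choose 2 * ∏ i ∈ Finset.range (k+1), ((i + 2) * (n - 1)) := by
          rw [Finset.prod_range_succ, mul_assoc]

lemma sm_count (d m : ℕ) :
    ((Finset.univ : Finset (Fin d → Fin m)).filter StrictMono).card ≤ m.choose d := by
  have htar : (Finset.powersetCard d (Finset.univ : Finset (Fin m))).card = m.choose d := by
    rw [Finset.card_powersetCard, Finset.card_univ, Fintype.card_fin]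
  rw [← htar]
  apply Finset.card_le_card_of_injOn (fun f => Finset.image f Finset.univ)
  · intro f hf
    rw [Finset.mem_coe, Finset.mem_powersetCard]
    refine ⟨Finset.subset_univ _, ?_⟩
    rw [Finset.card_image_of_injective _ ((Finset.mem_filter.1 hf).2).injective,
      Finset.card_univ, Fintype.card_fin]
  · intro f hf g hg heq
    simp only [Finset.coe_filter, Set.mem_setOf_eq] at hf hg
    have hfm : StrictMono f := hf.2
    have hgm : StrictMono g := hg.2
    have hcard : (Finset.image f Finset.univ).card = d := by
      rw [Finset.card_image_of_injective _ hfm.injective, Finset.card_univ, Fintype.card_fin]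
    have heq' : Finset.image f Finset.univ = Finset.image g Finset.univ := heq
    have h1 := Finset.orderEmbOfFin_unique hcard
      (fun i => Finset.mem_image_of_mem f (Finset.mem_univ i)) hfm
    have h2 := Finset.orderEmbOfFin_unique hcard
      (f := g) (fun i => by rw [heq']; exact Finset.mem_image_of_mem g (Finset.mem_univ i)) hgm
    exact h1.trans h2.symm

lemma restrict_count {n m d : ℕ} (f : Fin d → Fin m) (hf : Function.Injective f)
    (P : (Fin d → {s : Finset (Fin n) // s.card = 2}) → Prop) :
    ((Finset.univ : Finset (Fin m → {s : Finset (Fin n) // s.card = 2})).filter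
      (fun G => P (fun i => G (f i)))).card ≤
    ((Finset.univ : Finset (Fin d → {s : Finset (Fin n) // s.card = 2})).filter P).card
      * (n.choose 2) ^ (m - d) := by
  set Rf : Finset (Fin m) := Finset.image f Finset.univ with hRf
  have hRfcard : Rf.card = d := by
    rw [hRf, Finset.card_image_of_injective _ hf, Finset.card_univ, Fintype.card_fin]
  have hcompl : Fintype.card {x : Fin m // x ∉ Rf} = m - d := by
    rw [Fintype.card_subtype_compl]
    have : Fintype.card {x : Fin m // x ∈ Rf} = d := by
      rw [Fintype.card_coe, hRfcard]
    rw [this, Fintype.card_fin]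
  have hfun : Fintype.card ({x : Fin m // x ∉ Rf} → {s : Finset (Fin n) // s.card = 2}) = (n.choose 2) ^ (m - d) := by
    rw [Fintype.card_fun, hcompl]
    congr 1
    simpa using Fintype.card_finset_len (α := Fin n) 2
  have hmap : ∀ G ∈ ((Finset.univ : Finset (Fin m → {s : Finset (Fin n) // s.card = 2})).filter (fun G => P (fun i => G (f i)))),
      (fun i => G (f i)) ∈ ((Finset.univ : Finset (Fin d → {s : Finset (Fin n) // s.card = 2})).filter P) := by
    intro G hG
    exact Finset.mem_filter.2 ⟨Finset.mem_univ _, (Finset.mem_filter.1 hG).2⟩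
  rw [Finset.card_eq_sum_card_fiberwise hmap]
  have fiber_bound : ∀ h ∈ ((Finset.univ : Finset (Fin d → {s : Finset (Fin n) // s.card = 2})).filter P),
      (((Finset.univ : Finset (Fin m → {s : Finset (Fin n) // s.card = 2})).filter (fun G => P (fun i => G (f i)))).filter
        (fun G => (fun i => G (f i)) = h)).card ≤ (n.choose 2) ^ (m - d) := by
    intro h _
    rw [← hfun, ← Finset.card_univ]
    apply Finset.card_le_card_of_injOn (fun G => fun x : {x : Fin m // x ∉ Rf} => G x.1)
    · intro G _; exact Finset.mem_univ _
    · intro G1 hG1 G2 hG2 heq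
      simp only [Finset.coe_filter, Set.mem_setOf_eq] at hG1 hG2
      funext x
      by_cases hx : x ∈ Rf
      · rw [hRf] at hx
        obtain ⟨i, _, rfl⟩ := Finset.mem_image.1 hx
        have e1 : G1 (f i) = h i := congrFun hG1.2 i
        have e2 : G2 (f i) = h i := congrFun hG2.2 i
        rw [e1, e2]
      · exact congrFun heq ⟨x, hx⟩
  calc ∑ h ∈ ((Finset.univ : Finset (Fin d → {s : Finset (Fin n) // s.card = 2})).filter P),
        (((Finset.univ : Finset (Fin m → {s : Finset (Fin n) // s.card = 2})).filter (fun G => P (fun i => G (f i)))).filter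
          (fun G => (fun i => G (f i)) = h)).card
      ≤ ∑ _h ∈ ((Finset.univ : Finset (Fin d → {s : Finset (Fin n) // s.card = 2})).filter P), (n.choose 2) ^ (m - d) :=
        Finset.sum_le_sum fiber_bound
    _ = ((Finset.univ : Finset (Fin d → {s : Finset (Fin n) // s.card = 2})).filter P).card * (n.choose 2) ^ (m - d) := by
        rw [Finset.sum_const, smul_eq_mul]









lemma prod_shift (k : ℕ) : ∏ i ∈ Finset.range k, (i + 2) = (k + 1).factorial := by
  induction k with
  | zero => simp
  | succ k ih => rw [Finset.prod_range_succ, ih, Nat.factorial_succ (k+1)]; ring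

open Classical in
theorem stmt_8 (n m c : ℕ) (hm : n = 4 * m) (hn : 2 ≤ n) (hc : 1 ≤ c) :
    (((Finset.univ : Finset (Fin m → {s : Finset (Fin n) // s.card = 2})).filter
        (fun G => ∃ f : Fin (c * Nat.clog 2 n + 1) → Fin m, StrictMono f ∧
          ∀ i : Fin (c * Nat.clog 2 n + 1), 0 < i.1 →
            ∃ j : Fin (c * Nat.clog 2 n + 1), j < i ∧
              ((G (f i)).1 ∩ (G (f j)).1).Nonempty)).card : ℝ) /
      ((Finset.univ : Finset (Fin m → {s : Finset (Fin n) // s.card = 2})).card : ℝ)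
    ≤ (m : ℝ) * (2*(m:ℝ)/(n:ℝ))^(c * Nat.clog 2 n + 1 - 1) ∧
    (m : ℝ) * (2*(m:ℝ)/(n:ℝ))^(c * Nat.clog 2 n + 1 - 1) ≤ (n:ℝ)^((1:ℝ) - (c:ℝ)) := by
  have hm1 : 1 ≤ m := by omega
  have hn0 : 0 < n := by omega
  set k := c * Nat.clog 2 n with hk
  set N := n.choose 2 with hN
  have hNpos : 0 < N := Nat.choose_pos hn
  have hexp : c * Nat.clog 2 n + 1 - 1 = k := by omega
  rw [hexp]
  have h2mn : 2 * (m:ℝ) / (n:ℝ) = 1 / 2 := by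
    subst hm
    have : (m:ℝ) ≠ 0 := by positivity
    push_cast
    field_simp
    ring
  -- denominator
  have hdenom : ((Finset.univ : Finset (Fin m → {s : Finset (Fin n) // s.card = 2})).card : ℕ)
      = N ^ m := by
    rw [Finset.card_univ, Fintype.card_fun, card_S, Fintype.card_fin]
  constructor
  · -- main probability bound
    set E := ((Finset.univ : Finset (Fin m → {s : Finset (Fin n) // s.card = 2})).filter
        (fun G => ∃ f : Fin (c * Nat.clog 2 n + 1) → Fin m, StrictMono f ∧
          ∀ i : Fin (c * Nat.clog 2 n + 1), 0 < i.1 →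
            ∃ j : Fin (c * Nat.clog 2 n + 1), j < i ∧
              ((G (f i)).1 ∩ (G (f j)).1).Nonempty)) with hE
    set SM := ((Finset.univ : Finset (Fin (k+1) → Fin m)).filter StrictMono) with hSM
    by_cases hdm : k + 1 ≤ m
    · -- counting chain
      have hsub : E ⊆ SM.biUnion (fun f =>
          (Finset.univ : Finset (Fin m → {s : Finset (Fin n) // s.card = 2})).filter
            (fun G => chainP (fun i => G (f i)))) := by
        intro G hG
        obtain ⟨-, f, hf, hprop⟩ := Finset.mem_filter.1 hG
        refine Finset.mem_biUnion.2 ⟨f, Finset.mem_filter.2 ⟨Finset.mem_univ _, hf⟩, ?_⟩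
        exact Finset.mem_filter.2 ⟨Finset.mem_univ _, hprop⟩
      have hEcard : E.card ≤ SM.card * ((N * ∏ i ∈ Finset.range k, ((i + 2) * (n - 1)))
          * N ^ (m - (k+1))) := by
        calc E.card ≤ (SM.biUnion (fun f =>
              (Finset.univ : Finset (Fin m → {s : Finset (Fin n) // s.card = 2})).filter
                (fun G => chainP (fun i => G (f i))))).card := Finset.card_le_card hsub
          _ ≤ ∑ f ∈ SM, ((Finset.univ : Finset (Fin m → {s : Finset (Fin n) // s.card = 2})).filter
                (fun G => chainP (fun i => G (f i)))).card := Finset.card_biUnion_le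
          _ ≤ ∑ _f ∈ SM, ((N * ∏ i ∈ Finset.range k, ((i + 2) * (n - 1))) * N ^ (m - (k+1))) := by
              apply Finset.sum_le_sum
              intro f hf
              have hinj : Function.Injective f := ((Finset.mem_filter.1 hf).2).injective
              calc ((Finset.univ : Finset (Fin m → {s : Finset (Fin n) // s.card = 2})).filter
                    (fun G => chainP (fun i => G (f i)))).card
                  ≤ ((Finset.univ : Finset (Fin (k+1) → {s : Finset (Fin n) // s.card = 2})).filter
                    chainP).card * N ^ (m - (k+1)) := restrict_count f hinj chainP
                _ ≤ (N * ∏ i ∈ Finset.range k, ((i + 2) * (n - 1))) * N ^ (m - (k+1)) :=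
                    Nat.mul_le_mul_right _ (chain_count n hn0 k)
          _ = SM.card * ((N * ∏ i ∈ Finset.range k, ((i + 2) * (n - 1))) * N ^ (m - (k+1))) := by
              rw [Finset.sum_const, smul_eq_mul]
      -- simplify the bound
      have hprod : ∏ i ∈ Finset.range k, ((i + 2) * (n - 1)) = (k+1).factorial * (n-1)^k := by
        rw [Finset.prod_mul_distrib, prod_shift, Finset.prod_const, Finset.card_range]
      have hSMfact : SM.card * (k+1).factorial ≤ m ^ (k+1) := by
        calc SM.card * (k+1).factorial ≤ m.choose (k+1) * (k+1).factorial :=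
              Nat.mul_le_mul_right _ (sm_count (k+1) m)
          _ = (k+1).factorial * m.choose (k+1) := Nat.mul_comm _ _
          _ = m.descFactorial (k+1) := (Nat.descFactorial_eq_factorial_mul_choose m (k+1)).symm
          _ ≤ m ^ (k+1) := Nat.descFactorial_le_pow m (k+1)
      have hB : E.card ≤ m ^ (k+1) * (n-1)^k * N ^ (m - k) := by
        calc E.card ≤ SM.card * ((N * ((k+1).factorial * (n-1)^k)) * N ^ (m - (k+1))) := by
              rw [← hprod]; exact hEcard
          _ = (SM.card * (k+1).factorial) * (n-1)^k * (N ^ (m - (k+1)) * N) := by ring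
          _ ≤ m ^ (k+1) * (n-1)^k * (N ^ (m - (k+1)) * N) := by
              apply Nat.mul_le_mul_right
              exact Nat.mul_le_mul_right _ hSMfact
          _ = m ^ (k+1) * (n-1)^k * N ^ (m - k) := by
              rw [← pow_succ]
              congr 2
              omega
      -- now reals
      rw [hdenom]
      have hNm : (0:ℝ) < (N:ℝ) ^ m := by positivity
      rw [div_le_iff₀ (by exact_mod_cast hNm)]
      calc (E.card : ℝ) ≤ ((m ^ (k+1) * (n-1)^k * N ^ (m - k) : ℕ) : ℝ) := by
            exact_mod_cast hB
        _ = (m:ℝ) ^ (k+1) * ((n:ℝ)-1)^k * (N:ℝ) ^ (m - k) := by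
            push_cast [Nat.cast_sub (by omega : 1 ≤ n)]
            ring
        _ = (m:ℝ) * (2*(m:ℝ)/(n:ℝ))^k * ((N ^ m : ℕ) : ℝ) := by
            have hNcast : (N:ℝ) = (n:ℝ) * ((n:ℝ)-1) / 2 := by
              rw [hN]; exact_mod_cast Nat.cast_choose_two (K := ℝ) n
            have hsplit : ((N ^ m : ℕ) : ℝ) = (N:ℝ)^k * (N:ℝ)^(m-k) := by
              push_cast
              rw [← pow_add]
              congr 1
              omega
            rw [hsplit]
            have hkey : (2*(m:ℝ)/(n:ℝ))^k * (N:ℝ)^k = ((m:ℝ) * ((n:ℝ)-1))^k := by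
              rw [← mul_pow]
              congr 1
              rw [hNcast]
              have hnne : (n:ℝ) ≠ 0 := by positivity
              field_simp
            calc (m:ℝ) ^ (k+1) * ((n:ℝ)-1)^k * (N:ℝ) ^ (m - k)
                = (m:ℝ) * (((m:ℝ) * ((n:ℝ)-1))^k) * (N:ℝ)^(m-k) := by
                  rw [mul_pow, pow_succ]; ring
              _ = (m:ℝ) * ((2*(m:ℝ)/(n:ℝ))^k * (N:ℝ)^k) * (N:ℝ)^(m-k) := by rw [hkey]
              _ = (m:ℝ) * (2*(m:ℝ)/(n:ℝ))^k * ((N:ℝ)^k * (N:ℝ)^(m-k)) := by ring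
    · -- k + 1 > m : no strictly monotone maps, event is empty
      have hSMempty : SM = ∅ := by
        rw [hSM]
        apply Finset.filter_false_of_mem
        intro f _ hf
        have := Fintype.card_le_of_injective f hf.injective
        simp [Fintype.card_fin] at this
        omega
      have hEempty : E = ∅ := by
        rw [hE]
        apply Finset.filter_false_of_mem
        intro G _ ⟨f, hf, _⟩
        have := Fintype.card_le_of_injective f hf.injective
        simp [Fintype.card_fin] at this
        omega
      rw [hEempty]
      simp only [Finset.card_empty, Nat.cast_zero, zero_div]
      rw [h2mn]
      positivity
  · -- arithmetic bound
    rw [h2mn]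
    have hL : n ≤ 2 ^ Nat.clog 2 n := Nat.le_pow_clog one_lt_two n
    have hnat : m * n ^ c ≤ n * 2 ^ k := by
      calc m * n ^ c ≤ n * n ^ c := Nat.mul_le_mul_right _ (by omega)
        _ ≤ n * (2 ^ Nat.clog 2 n) ^ c := Nat.mul_le_mul_left _ (Nat.pow_le_pow_left hL c)
        _ = n * 2 ^ k := by rw [← pow_mul, hk, Nat.mul_comm c _]
    have hrw : (n:ℝ) ^ ((1:ℝ) - (c:ℝ)) = (n:ℝ) / (n:ℝ) ^ c := by
      rw [Real.rpow_sub (by positivity), Real.rpow_one, Real.rpow_natCast]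
    rw [hrw]
    rw [one_div, inv_pow, ← one_div, mul_one_div]
    rw [div_le_div_iff₀ (by positivity) (by positivity)]
    exact_mod_cast hnat
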